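/- Let t ∈ ℂ with f(t) < 0. Then the cubic polynomial s³ − t·s² + conj(t)·s − 1 has three pairwise distinct complex roots, each of modulus 1. -/

import Mathlib

/-- The function `f(t) = |t|⁴ − 8 Re(t³) + 18 |t|² − 27`. -/
noncomputable def fdisc (t : ℂ) : ℝ :=
  ‖t‖ ^ 4 - 8 * (t ^ 3).re + 18 * ‖t‖ ^ 2 - 27

open Polynomial

/-- The characteristic cubic `s³ − t·s² + conj(t)·s − 1`. -/
noncomputable def cubic (t : ℂ) : Polynomial ℂ :=
  X ^ 3 - C t * X ^ 2 + C ((starRingEnd ℂ) t) * X - 1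

private lemma key_real (a b c : ℂ) (habc : a * b * c = 1)
    (hb : b = ((starRingEnd ℂ) a)⁻¹) :
    (starRingEnd ℂ) ((a - b) * (a - c) * (b - c)) = (a - b) * (a - c) * (b - c) := by
  have ha : a ≠ 0 := by rintro rfl; simp at habc
  have hA : (starRingEnd ℂ) a ≠ 0 := by simpa using ha
  have hc : c = (starRingEnd ℂ) a / a := by
    subst hb
    field_simp at habc
    field_simp
    linear_combination habc
  subst hb hc
  simp only [map_mul, map_sub, map_inv₀, map_div₀, Complex.conj_conj]
  field_simp
  ring

private lemma re_sq_nonneg (a b c : ℂ) (habc : a * b * c = 1)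
    (hb : b = ((starRingEnd ℂ) a)⁻¹) :
    0 ≤ (((a - b) * (a - c) * (b - c)) ^ 2).re := by
  have hD := key_real a b c habc hb
  set D := (a - b) * (a - c) * (b - c) with hDdef
  have him : D.im = 0 := by
    have := congrArg Complex.im hD
    simp [Complex.conj_im] at this
    linarith
  have : (D ^ 2).re = D.re ^ 2 := by
    simp [pow_two, Complex.mul_re, him]
  rw [this]
  positivity

private lemma mod_one (a b c : ℂ) (habc : a * b * c = 1)
    (hneg : (((a - b) * (a - c) * (b - c)) ^ 2).re < 0)
    (hmem : ((starRingEnd ℂ) a)⁻¹ = a ∨ ((starRingEnd ℂ) a)⁻¹ = b ∨ ((starRingEnd ℂ) a)⁻¹ = c) :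
    ‖a‖ = 1 := by
  have ha : a ≠ 0 := by rintro rfl; simp at habc
  have hA : (starRingEnd ℂ) a ≠ 0 := by simpa using ha
  rcases hmem with h | h | h
  · have h1 : a * (starRingEnd ℂ) a = 1 := by
      field_simp at h
      linear_combination -h
    have h2 : ‖a‖ ^ 2 = 1 := by
      have := Complex.mul_conj a
      rw [h1] at this
      have h3 := Complex.sq_norm a
      have : Complex.normSq a = 1 := by
        have := this.symm
        exact_mod_cast this
      rw [h3, this]
    nlinarith [norm_nonneg a]
  · exact absurd (re_sq_nonneg a b c habc h.symm) (not_le.mpr hneg)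
  · have habc' : a * c * b = 1 := by linear_combination habc
    have h0 := re_sq_nonneg a c b habc' h.symm
    have e : ((a - c) * (a - b) * (c - b)) ^ 2 = ((a - b) * (a - c) * (b - c)) ^ 2 := by ring
    rw [e] at h0
    exact absurd h0 (not_le.mpr hneg)

private lemma fdisc_cast (t : ℂ) :
    ((fdisc t : ℝ) : ℂ) = (t * (starRingEnd ℂ) t) ^ 2 - 4 * (t ^ 3 + ((starRingEnd ℂ) t) ^ 3)
      + 18 * (t * (starRingEnd ℂ) t) - 27 := by
  have h1 : t * (starRingEnd ℂ) t = ((‖t‖ ^ 2 : ℝ) : ℂ) := by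
    rw [Complex.mul_conj, Complex.sq_norm]
  have h2 : t ^ 3 + ((starRingEnd ℂ) t) ^ 3 = ((2 * (t ^ 3).re : ℝ) : ℂ) := by
    rw [← Complex.add_conj, map_pow]
  rw [h1, h2]
  unfold fdisc
  push_cast
  ring

theorem roots_of_fneg (t : ℂ) (hf : fdisc t < 0) :
    ∃ l₁ l₂ l₃ : ℂ, l₁ ≠ l₂ ∧ l₁ ≠ l₃ ∧ l₂ ≠ l₃ ∧
      (cubic t).IsRoot l₁ ∧ (cubic t).IsRoot l₂ ∧ (cubic t).IsRoot l₃ ∧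
      ‖l₁‖ = 1 ∧ ‖l₂‖ = 1 ∧ ‖l₃‖ = 1 := by
  classical
  set T := (starRingEnd ℂ) t with hT
  set P : Cubic ℂ := ⟨1, -t, T, -1⟩ with hPdef
  have ha : P.a ≠ 0 := one_ne_zero
  have hsp : Splits (P.toPoly.map (RingHom.id ℂ)) := IsAlgClosed.splits _
  obtain ⟨x, y, z, h3⟩ := (Cubic.splits_iff_roots_eq_three ha).mp hsp
  have hb := Cubic.b_eq_three_roots ha h3
  have hc := Cubic.c_eq_three_roots ha h3
  have hd := Cubic.d_eq_three_roots ha h3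
  simp only [RingHom.id_apply, hPdef, one_mul] at hb hc hd
  have he3 : x * y * z = 1 := by linear_combination hd
  -- the polynomial identity
  have hPc : P.toPoly = cubic t := by
    simp [Cubic.toPoly, cubic, hPdef]
    ring
  have hP0 : P.toPoly ≠ 0 := Cubic.ne_zero_of_a_ne_zero ha
  have hroots : (cubic t).roots = {x, y, z} := by
    rw [← hPc]
    rw [Cubic.map_roots, Polynomial.map_id] at h3
    exact h3
  -- discriminant
  have hdisc := Cubic.discr_eq_prod_three_roots ha h3
  simp only [RingHom.id_apply, hPdef, one_mul] at hdisc
  have hdval : ((fdisc t : ℝ) : ℂ) = ((x - y) * (x - z) * (y - z)) ^ 2 := by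
    rw [fdisc_cast]
    simp only [Cubic.discr, hPdef] at hdisc
    rw [← hT]
    linear_combination hdisc
  have hdne : P.discr ≠ 0 := by
    simp only [Cubic.discr, hPdef]
    intro h0
    have : ((fdisc t : ℝ) : ℂ) = 0 := by
      rw [fdisc_cast, ← hT]
      linear_combination h0
    simp only [Complex.ofReal_eq_zero] at this
    linarith
  obtain ⟨hxy, hxz, hyz⟩ := (Cubic.discr_ne_zero_iff_roots_ne ha h3).mp hdne
  -- negativity of the real part of the discriminant
  have hneg : (((x - y) * (x - z) * (y - z)) ^ 2).re < 0 := by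
    rw [← hdval, Complex.ofReal_re]; exact hf
  -- roots and self-inversiveness
  have hrootiff : ∀ s : ℂ, (cubic t).IsRoot s ↔ s ^ 3 - t * s ^ 2 + T * s - 1 = 0 := by
    intro s
    simp [cubic, IsRoot, hT]
  have hmemiff : ∀ s : ℂ, s ∈ (cubic t).roots ↔ s ^ 3 - t * s ^ 2 + T * s - 1 = 0 := by
    intro s
    rw [mem_roots (hPc ▸ hP0), hrootiff]
  have hinv : ∀ s : ℂ, s ≠ 0 → s ^ 3 - t * s ^ 2 + T * s - 1 = 0 →
      (((starRingEnd ℂ) s)⁻¹) ^ 3 - t * (((starRingEnd ℂ) s)⁻¹) ^ 2 + T * ((starRingEnd ℂ) s)⁻¹ - 1 = 0 := by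
    intro s hs h
    have hcs : (starRingEnd ℂ) s ≠ 0 := by simpa using hs
    have hconj := congrArg (starRingEnd ℂ) h
    simp only [map_sub, map_add, map_mul, map_pow, map_one, map_zero, ← hT] at hconj
    have hTT : (starRingEnd ℂ) T = t := by rw [hT]; exact Complex.conj_conj t
    rw [hTT] at hconj
    have h9 : (((starRingEnd ℂ) s)⁻¹) ^ 3 - t * (((starRingEnd ℂ) s)⁻¹) ^ 2 + T * ((starRingEnd ℂ) s)⁻¹ - 1
        = -((((starRingEnd ℂ) s)⁻¹) ^ 3) * ((starRingEnd ℂ) s ^ 3 - T * (starRingEnd ℂ) s ^ 2 + t * (starRingEnd ℂ) s - 1) := by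
      field_simp
      ring
    rw [h9, hconj, mul_zero]
  -- the three roots are nonzero
  have hx0 : x ≠ 0 := by rintro rfl; simp at he3
  have hy0 : y ≠ 0 := by rintro rfl; simp at he3
  have hz0 : z ≠ 0 := by rintro rfl; simp at he3
  have hmem : ∀ s : ℂ, s ≠ 0 → s ∈ (cubic t).roots →
      ((starRingEnd ℂ) s)⁻¹ = x ∨ ((starRingEnd ℂ) s)⁻¹ = y ∨ ((starRingEnd ℂ) s)⁻¹ = z := by
    intro s hs hmem'
    have h1 := hinv s hs ((hmemiff s).mp hmem')
    have h2 : ((starRingEnd ℂ) s)⁻¹ ∈ (cubic t).roots := (hmemiff _).mpr h1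
    rw [hroots] at h2
    simpa using h2
  have hxr : x ∈ (cubic t).roots := by rw [hroots]; simp
  have hyr : y ∈ (cubic t).roots := by rw [hroots]; simp
  have hzr : z ∈ (cubic t).roots := by rw [hroots]; simp
  have habsx : ‖x‖ = 1 := mod_one x y z he3 hneg (hmem x hx0 hxr)
  have habsy : ‖y‖ = 1 := by
    apply mod_one y x z (by linear_combination he3) _ _
    · have e : ((y - x) * (y - z) * (x - z)) ^ 2 = ((x - y) * (x - z) * (y - z)) ^ 2 := by ring
      rw [e]; exact hneg
    · rcases hmem y hy0 hyr with h | h | h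
      · exact Or.inr (Or.inl h)
      · exact Or.inl h
      · exact Or.inr (Or.inr h)
  have habsz : ‖z‖ = 1 := by
    apply mod_one z x y (by linear_combination he3) _ _
    · have e : ((z - x) * (z - y) * (x - y)) ^ 2 = ((x - y) * (x - z) * (y - z)) ^ 2 := by ring
      rw [e]; exact hneg
    · rcases hmem z hz0 hzr with h | h | h
      · exact Or.inr (Or.inl h)
      · exact Or.inr (Or.inr h)
      · exact Or.inl h
  exact ⟨x, y, z, hxy, hxz, hyz,
    isRoot_of_mem_roots hxr, isRoot_of_mem_roots hyr, isRoot_of_mem_roots hzr,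
    habsx, habsy, habsz⟩
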